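/- Let S ⊆ ℤ \ {0} be finite and let d ≥ 1 divide every element of S. Then γ̄(ℤ, S/d) = γ̄(ℤ, S), where S/d = {s/d : s ∈ S}. -/

import Mathlib

open Filter

/-- Lower density of a set of integers. -/
noncomputable def lowerDensity (D : Set ℤ) : ℝ :=
  Filter.liminf (fun n : ℕ =>
    ((D ∩ Set.Icc (-(n : ℤ)) (n : ℤ)).ncard : ℝ) / (2 * (n : ℝ) + 1)) Filter.atTop

/-- `D` is a dominating set of the integer distance digraph `Γ(ℤ,S)`. -/
def Dominating (S D : Set ℤ) : Prop :=
  ∀ m : ℤ, m ∈ D ∨ ∃ u ∈ D, ∃ s ∈ S, m = u + s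

/-- Domination ratio of `Γ(ℤ,S)`. -/
noncomputable def dominationRatio (S : Set ℤ) : ℝ :=
  sInf (lowerDensity '' {D : Set ℤ | Dominating S D})

/-- `D` is an efficient dominating set of `Γ(ℤ,S)`: every integer is dominated
by exactly one element of `D`. -/
def EffDominating (S D : Set ℤ) : Prop :=
  ∀ m : ℤ, ∃! u, u ∈ D ∧ (u = m ∨ m - u ∈ S)

/-! ### Auxiliary liminf lemmas -/

lemma auxBddLe {u : ℕ → ℝ} {C : ℝ} (h : ∀ n, u n ≤ C) :
    IsBoundedUnder (· ≤ ·) atTop u := ⟨C, Filter.eventually_map.2 (Eventually.of_forall h)⟩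

lemma auxBddGe {u : ℕ → ℝ} {C : ℝ} (h : ∀ n, C ≤ u n) :
    IsBoundedUnder (· ≥ ·) atTop u := ⟨C, Filter.eventually_map.2 (Eventually.of_forall h)⟩

/-- If `u ≤ v + ε` eventually with `ε → 0` and suitable boundedness,
then `liminf u ≤ liminf v`. -/
lemma auxL0 {u v ε : ℕ → ℝ} {C : ℝ} (hu0 : ∀ n, 0 ≤ u n)
    (hv0 : ∀ n, 0 ≤ v n) (hv1 : ∀ n, v n ≤ C)
    (hε : Tendsto ε atTop (nhds 0)) (h : ∀ᶠ n in atTop, u n ≤ v n + ε n) :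
    liminf u atTop ≤ liminf v atTop := by
  have h1 : liminf u atTop ≤ liminf (ε + v) atTop := by
    refine liminf_le_liminf (h.mono fun n hn => ?_) (auxBddGe hu0)
      ((isBoundedUnder_le_add hε.isBoundedUnder_le (auxBddLe hv1)).isCoboundedUnder_ge)
    simpa [add_comm] using hn
  have h2 : liminf (ε + v) atTop ≤ limsup ε atTop + liminf v atTop :=
    liminf_add_le hε.isBoundedUnder_ge hε.isBoundedUnder_le (auxBddGe hv0)
      ((auxBddLe hv1).isCoboundedUnder_ge)
  rw [hε.limsup_eq, zero_add] at h2
  exact h1.trans h2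

/-- The liminf along a subsequence is at least the liminf. -/
lemma auxSub {u : ℕ → ℝ} {C : ℝ} (h0 : ∀ n, 0 ≤ u n) (h1 : ∀ n, u n ≤ C)
    {φ : ℕ → ℕ} (hφ : Tendsto φ atTop atTop) :
    liminf u atTop ≤ liminf (u ∘ φ) atTop := by
  rw [Filter.liminf_comp]
  refine liminf_le_liminf_of_le hφ (auxBddGe h0) ?_
  have hb : IsBoundedUnder (· ≤ ·) (Filter.map φ atTop) u :=
    ⟨C, by rw [Filter.eventually_map, Filter.eventually_map]
           exact Eventually.of_forall fun n => h1 _⟩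
  exact hb.isCoboundedUnder_ge

lemma auxSucc (u : ℕ → ℝ) : liminf (fun n => u (n + 1)) atTop = liminf u atTop := by
  have : (fun n => u (n + 1)) = u ∘ (fun n => n + 1) := rfl
  rw [this, Filter.liminf_comp, Filter.map_add_atTop_eq_nat 1]

/-- Superadditivity of liminf over finite sums of `[0,1]`-valued sequences. -/
lemma auxSum {ι : Type*} (R : Finset ι) (u : ι → ℕ → ℝ)
    (h0 : ∀ i, ∀ n, 0 ≤ u i n) (h1 : ∀ i, ∀ n, u i n ≤ 1) :
    ∑ i ∈ R, liminf (u i) atTop ≤ liminf (fun n => ∑ i ∈ R, u i n) atTop := by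
  classical
  induction R using Finset.induction_on with
  | empty => simp
  | @insert a s hx ih =>
    rw [Finset.sum_insert hx]
    have hfun : (fun n => ∑ i ∈ insert a s, u i n) = (u a + fun n => ∑ i ∈ s, u i n) := by
      funext n; simp [Finset.sum_insert hx]
    rw [hfun]
    refine le_trans (add_le_add_right ih _) ?_
    refine le_liminf_add (auxBddGe (h0 a)) (auxBddLe (h1 a))
      (auxBddGe (C := (0:ℝ)) fun n => Finset.sum_nonneg fun i _ => h0 i n) ?_
    refine (auxBddLe (C := (s.card : ℝ)) fun n => ?_).isCoboundedUnder_ge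
    calc ∑ i ∈ s, u i n ≤ ∑ i ∈ s, 1 := Finset.sum_le_sum fun i _ => h1 i n
    _ = (s.card : ℝ) := by simp

/-- Pulling a nonnegative constant into a liminf. -/
lemma auxCMul {c : ℝ} (hc : 0 ≤ c) {v : ℕ → ℝ} {C : ℝ} (hv0 : ∀ n, 0 ≤ v n)
    (hv1 : ∀ n, v n ≤ C) :
    c * liminf v atTop ≤ liminf (fun n => c * v n) atTop := by
  have := le_liminf_mul (f := atTop) (u := fun _ : ℕ => c) (v := v)
    (Eventually.of_forall fun _ => hc) (auxBddLe fun _ => le_rfl)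
    (Eventually.of_forall hv0) ((auxBddLe hv1).isCoboundedUnder_ge)
  rwa [Filter.liminf_const] at this

/-! ### Counting infrastructure -/

open Classical in
noncomputable def cntF (A : Set ℤ) (n : ℕ) : Finset ℤ :=
  (Finset.Icc (-(n : ℤ)) (n : ℤ)).filter (· ∈ A)

noncomputable def dseq (A : Set ℤ) (n : ℕ) : ℝ := ((cntF A n).card : ℝ) / (2 * (n : ℝ) + 1)

lemma mem_cntF {A : Set ℤ} {n : ℕ} {x : ℤ} :
    x ∈ cntF A n ↔ (-(n : ℤ) ≤ x ∧ x ≤ (n : ℤ)) ∧ x ∈ A := by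
  simp [cntF, Finset.mem_filter, Finset.mem_Icc, and_assoc]

lemma cntF_coe (A : Set ℤ) (n : ℕ) : (↑(cntF A n) : Set ℤ) = A ∩ Set.Icc (-(n : ℤ)) n := by
  ext x
  simp only [cntF, Finset.coe_filter, Set.mem_setOf_eq, Finset.mem_Icc, Set.mem_inter_iff,
    Set.mem_Icc]
  tauto

lemma lowerDensity_eq (A : Set ℤ) : lowerDensity A = liminf (dseq A) atTop := by
  unfold lowerDensity dseq
  congr 1
  funext n
  rw [← cntF_coe A n, Set.ncard_coe_finset]

lemma denom_pos (n : ℕ) : (0 : ℝ) < 2 * (n : ℝ) + 1 := by positivity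

lemma cntF_card_le (A : Set ℤ) (n : ℕ) : (cntF A n).card ≤ 2 * n + 1 := by
  classical
  refine (Finset.card_filter_le _ _).trans ?_
  rw [Int.card_Icc]
  omega

lemma dseq_nonneg (A : Set ℤ) (n : ℕ) : 0 ≤ dseq A n := by
  unfold dseq; positivity

lemma dseq_le_one (A : Set ℤ) (n : ℕ) : dseq A n ≤ 1 := by
  rw [dseq, div_le_one (denom_pos n)]
  have h := cntF_card_le A n
  have : ((cntF A n).card : ℝ) ≤ ((2 * n + 1 : ℕ) : ℝ) := Nat.cast_le.2 h
  push_cast at this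
  linarith

lemma lowerDensity_nonneg (A : Set ℤ) : 0 ≤ lowerDensity A := by
  rw [lowerDensity_eq]
  refine le_liminf_of_le ?_ (Eventually.of_forall fun n => dseq_nonneg A n)
  have hb : IsBoundedUnder (· ≤ ·) atTop (dseq A) :=
    ⟨1, Filter.eventually_map.2 (Eventually.of_forall fun n => dseq_le_one A n)⟩
  exact hb.isCoboundedUnder_ge

lemma cntB {d : ℤ} (hd : 1 ≤ d) (E : Set ℤ) (m : ℕ) :
    (cntF {x : ℤ | x / d ∈ E} (d.toNat * m)).card ≤ d.toNat * (cntF E (m + 1)).card := by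
  classical
  have hd0 : d ≠ 0 := by omega
  have hdpos : (0 : ℤ) < d := by omega
  have hdt : (d.toNat : ℤ) = d := Int.toNat_of_nonneg (by omega)
  set s := cntF {x : ℤ | x / d ∈ E} (d.toNat * m) with hs
  have key : s.card ≤ d.toNat * (s.image (· / d)).card := by
    refine Finset.card_le_mul_card_image s d.toNat fun b _ => ?_
    have hsub : s.filter (· / d = b) ⊆ Finset.Icc (d * b) (d * b + (d - 1)) := by
      intro x hx
      rw [Finset.mem_filter] at hx
      obtain ⟨-, hxb⟩ := hx
      have h1 : d * (x / d) + x % d = x := Int.mul_ediv_add_emod x d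
      have h2 : 0 ≤ x % d := Int.emod_nonneg x hd0
      have h3 : x % d < d := Int.emod_lt_of_pos x hdpos
      rw [hxb] at h1
      exact Finset.mem_Icc.2 ⟨by linarith, by linarith⟩
    refine (Finset.card_le_card hsub).trans ?_
    rw [Int.card_Icc]
    omega
  refine key.trans (Nat.mul_le_mul_left _ (Finset.card_le_card ?_))
  intro b hb
  obtain ⟨x, hx, rfl⟩ := Finset.mem_image.1 hb
  rw [hs, mem_cntF] at hx
  obtain ⟨⟨hxl, hxu⟩, hxE⟩ := hx
  have hc : ((d.toNat * m : ℕ) : ℤ) = d * m := by push_cast [hdt]; ring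
  rw [hc] at hxl hxu
  rw [mem_cntF]
  refine ⟨⟨?_, ?_⟩, hxE⟩
  · have h1 : d * (-(m : ℤ) - 1) ≤ x := by nlinarith
    have h2 := Int.ediv_le_ediv hdpos h1
    rw [Int.mul_ediv_cancel_left _ hd0] at h2
    push_cast
    linarith
  · have h2 := Int.ediv_le_ediv hdpos hxu
    rw [Int.mul_ediv_cancel_left _ hd0] at h2
    push_cast
    linarith

lemma cntA {d : ℤ} (hd : 1 ≤ d) (D : Set ℤ) (n m : ℕ) (h : d * ((m : ℤ) + 1) ≤ (n : ℤ)) :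
    ∑ r ∈ Finset.Icc (0 : ℤ) (d - 1), (cntF {e : ℤ | d * e + r ∈ D} m).card
      ≤ (cntF D n).card := by
  classical
  have hd0 : d ≠ 0 := by omega
  have hdpos : (0 : ℤ) < d := by omega
  set R := Finset.Icc (0 : ℤ) (d - 1) with hR
  have hinj : ∀ r : ℤ, Function.Injective (fun e : ℤ => d * e + r) := by
    intro r a b hab
    simp only [add_left_inj] at hab
    exact mul_left_cancel₀ hd0 hab
  have hdisj : ∀ r₁ ∈ R, ∀ r₂ ∈ R, r₁ ≠ r₂ →
      Disjoint ((cntF {e : ℤ | d * e + r₁ ∈ D} m).image (fun e => d * e + r₁))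
        ((cntF {e : ℤ | d * e + r₂ ∈ D} m).image (fun e => d * e + r₂)) := by
    intro r₁ hr₁ r₂ hr₂ hne
    rw [Finset.disjoint_left]
    rintro x hx₁ hx₂
    obtain ⟨e₁, -, he₁⟩ := Finset.mem_image.1 hx₁
    obtain ⟨e₂, -, he₂⟩ := Finset.mem_image.1 hx₂
    rw [hR, Finset.mem_Icc] at hr₁ hr₂
    have hdvd : r₁ - r₂ = d * (e₂ - e₁) := by rw [← he₂] at he₁; linarith [he₁, mul_sub d e₂ e₁]
    have h1 : d * (e₂ - e₁) < d * 1 := by omega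
    have h2 : d * (-1) < d * (e₂ - e₁) := by omega
    have k1 : e₂ - e₁ < 1 := lt_of_mul_lt_mul_left h1 (le_of_lt hdpos)
    have k2 : (-1 : ℤ) < e₂ - e₁ := lt_of_mul_lt_mul_left h2 (le_of_lt hdpos)
    have : e₂ = e₁ := by omega
    rw [this] at hdvd
    simp at hdvd
    omega
  calc ∑ r ∈ R, (cntF {e : ℤ | d * e + r ∈ D} m).card
      = ∑ r ∈ R, ((cntF {e : ℤ | d * e + r ∈ D} m).image (fun e => d * e + r)).card :=
        Finset.sum_congr rfl fun r _ => (Finset.card_image_of_injective _ (hinj r)).symm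
    _ = (R.biUnion fun r => (cntF {e : ℤ | d * e + r ∈ D} m).image (fun e => d * e + r)).card :=
        (Finset.card_biUnion hdisj).symm
    _ ≤ (cntF D n).card := by
        refine Finset.card_le_card ?_
        intro x hx
        obtain ⟨r, hr, hx⟩ := Finset.mem_biUnion.1 hx
        obtain ⟨e, he, rfl⟩ := Finset.mem_image.1 hx
        rw [mem_cntF] at he
        obtain ⟨⟨hel, heu⟩, heD⟩ := he
        rw [hR, Finset.mem_Icc] at hr
        have hm1 : d * (-(m : ℤ)) ≤ d * e := mul_le_mul_of_nonneg_left hel (le_of_lt hdpos)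
        have hm2 : d * e ≤ d * (m : ℤ) := mul_le_mul_of_nonneg_left heu (le_of_lt hdpos)
        have hexp : d * ((m : ℤ) + 1) = d * (m : ℤ) + d := by ring
        have hneg : d * (-(m : ℤ)) = -(d * (m : ℤ)) := by ring
        rw [mem_cntF]
        exact ⟨⟨by linarith, by linarith⟩, heD⟩

/-! ### Two elementary real inequalities -/

lemma auxIneqB {dR mR X : ℝ} (hd : 1 ≤ dR) (hm : 0 ≤ mR) (hX : 0 ≤ X) (hXle : X ≤ 2 * mR + 3) :
    dR * X / (2 * dR * mR + 1) ≤ X / (2 * mR + 3) + 3 * dR / (2 * dR * mR + 1) := by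
  have h1 : (0:ℝ) < 2 * dR * mR + 1 := by nlinarith
  have h2 : (0:ℝ) < 2 * mR + 3 := by linarith
  have key : (dR * X - 3 * dR) / (2 * dR * mR + 1) ≤ X / (2 * mR + 3) := by
    rw [div_le_div_iff₀ h1 h2]
    nlinarith [mul_le_mul_of_nonneg_left hXle (by linarith : (0:ℝ) ≤ 3 * dR)]
  have e1 : dR * X / (2 * dR * mR + 1)
      = (dR * X - 3 * dR) / (2 * dR * mR + 1) + 3 * dR / (2 * dR * mR + 1) := by
    rw [← add_div, sub_add_cancel]
  rw [e1]
  exact add_le_add_left key _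

lemma auxIneqA {dR mR nR B : ℝ} (hd : 1 ≤ dR) (hm : 0 ≤ mR) (hB0 : 0 ≤ B) (hBd : B ≤ dR)
    (hn : 0 ≤ nR) (hup : 2 * nR + 1 ≤ 2 * dR * mR + 4 * dR) :
    (1 / dR) * B - 3 / (2 * mR + 4) ≤ ((2 * mR + 1) / (2 * nR + 1)) * B := by
  have hd0 : (0:ℝ) < dR := by linarith
  have h2 : (0:ℝ) < 2 * mR + 4 := by linarith
  have h3 : (0:ℝ) < 2 * nR + 1 := by linarith
  have h4 : (0:ℝ) < 2 * dR * mR + 4 * dR := by nlinarith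
  have e1 : (1 / dR) * B
      = ((2 * mR + 1) / (2 * dR * mR + 4 * dR)) * B + (3 / (dR * (2 * mR + 4))) * B := by
    field_simp
    ring
  have e2 : (3 / (dR * (2 * mR + 4))) * B ≤ 3 / (2 * mR + 4) := by
    rw [div_mul_eq_mul_div, div_le_div_iff₀ (by positivity) h2]
    nlinarith
  have e3 : ((2 * mR + 1) / (2 * dR * mR + 4 * dR)) * B
      ≤ ((2 * mR + 1) / (2 * nR + 1)) * B := by
    refine mul_le_mul_of_nonneg_right ?_ hB0
    exact div_le_div_of_nonneg_left (by linarith) h3 hup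
  linarith [e1, e2, e3]

/-! ### The two directions -/

lemma dirB {S : Set ℤ} {d : ℤ} (hd : 1 ≤ d) (hdvd : ∀ s ∈ S, d ∣ s)
    {E : Set ℤ} (hE : Dominating ((fun s => s / d) '' S) E) :
    ∃ D : Set ℤ, Dominating S D ∧ lowerDensity D ≤ lowerDensity E := by
  have hd0 : d ≠ 0 := by omega
  have hdpos : (0 : ℤ) < d := by omega
  refine ⟨{m : ℤ | m / d ∈ E}, ?_, ?_⟩
  · intro m
    rcases hE (m / d) with h | ⟨u, hu, s', hs', heq⟩
    · exact Or.inl h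
    · obtain ⟨s, hsS, rfl⟩ := hs'
      have h0 : 0 ≤ m % d := Int.emod_nonneg m hd0
      have h1 : m % d < d := Int.emod_lt_of_pos m hdpos
      refine Or.inr ⟨d * u + m % d, ?_, s, hsS, ?_⟩
      · show (d * u + m % d) / d ∈ E
        have : (d * u + m % d) / d = u + (m % d) / d := by
          rw [add_comm (d * u), mul_comm d u, Int.add_mul_ediv_right _ _ hd0]
          ring
        rw [this, Int.ediv_eq_zero_of_lt h0 h1, add_zero]
        exact hu
      · have hs : d * (s / d) = s := Int.mul_ediv_cancel' (hdvd s hsS)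
        have hm : d * (m / d) + m % d = m := Int.mul_ediv_add_emod m d
        rw [heq, mul_add] at hm
        linarith
  · rw [lowerDensity_eq, lowerDensity_eq]
    set d' := d.toNat with hd'
    have hd'pos : 0 < d' := by omega
    have hdt : (d' : ℤ) = d := Int.toNat_of_nonneg (by omega)
    have hdR : ((d' : ℕ) : ℝ) = (d : ℝ) := by exact_mod_cast congrArg (fun z : ℤ => (z : ℝ)) hdt
    have hdR1 : (1:ℝ) ≤ (d:ℝ) := by exact_mod_cast hd
    have hφ : Tendsto (fun m : ℕ => d' * m) atTop atTop := by
      refine tendsto_atTop_atTop.2 fun b => ⟨b, fun n hn => ?_⟩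
      calc b ≤ n := hn
      _ ≤ d' * n := Nat.le_mul_of_pos_left n hd'pos
    have step1 := auxSub (dseq_nonneg {m : ℤ | m / d ∈ E}) (dseq_le_one {m : ℤ | m / d ∈ E}) hφ
    have hεt : Tendsto (fun m : ℕ => 3 * (d:ℝ) / (2 * (d:ℝ) * m + 1)) atTop (nhds 0) := by
      refine Tendsto.div_atTop tendsto_const_nhds ?_
      refine tendsto_atTop_add_const_right _ 1 ?_
      refine Tendsto.const_mul_atTop (by linarith : (0:ℝ) < 2 * (d:ℝ)) ?_
      exact tendsto_natCast_atTop_atTop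
    have step2 : liminf (dseq {m : ℤ | m / d ∈ E} ∘ fun m => d' * m) atTop
        ≤ liminf (fun m => dseq E (m + 1)) atTop := by
      refine auxL0 (fun n => dseq_nonneg _ _) (fun n => dseq_nonneg _ _)
        (fun n => dseq_le_one _ _) hεt (Eventually.of_forall fun m => ?_)
      have hcnt := cntB hd E m
      have hcR : (((cntF {x : ℤ | x / d ∈ E} (d' * m)).card : ℝ))
          ≤ (d : ℝ) * ((cntF E (m + 1)).card : ℝ) := by
        have := (Nat.cast_le (α := ℝ)).2 hcnt
        push_cast at this
        rw [hdR] at this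
        linarith
      have hden : (2 * ((d' * m : ℕ) : ℝ) + 1) = 2 * (d:ℝ) * m + 1 := by
        push_cast [hdR]
        ring
      have hXle : ((cntF E (m + 1)).card : ℝ) ≤ 2 * (m:ℝ) + 3 := by
        have h := cntF_card_le E (m + 1)
        have : ((cntF E (m + 1)).card : ℝ) ≤ ((2 * (m + 1) + 1 : ℕ) : ℝ) := Nat.cast_le.2 h
        push_cast at this
        linarith
      have hdenpos : (0:ℝ) < 2 * (d:ℝ) * m + 1 := by
        have : (0:ℝ) ≤ (m:ℝ) := Nat.cast_nonneg m
        nlinarith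
      calc (dseq {m : ℤ | m / d ∈ E} ∘ fun m => d' * m) m
          = ((cntF {x : ℤ | x / d ∈ E} (d' * m)).card : ℝ) / (2 * ((d' * m : ℕ) : ℝ) + 1) := rfl
        _ ≤ (d:ℝ) * ((cntF E (m + 1)).card : ℝ) / (2 * (d:ℝ) * m + 1) := by
            rw [hden]
            exact (div_le_div_iff_of_pos_right hdenpos).2 hcR
        _ ≤ ((cntF E (m + 1)).card : ℝ) / (2 * (m:ℝ) + 3) + 3 * (d:ℝ) / (2 * (d:ℝ) * m + 1) :=
            auxIneqB hdR1 (Nat.cast_nonneg m) (Nat.cast_nonneg _) hXle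
        _ = dseq E (m + 1) + 3 * (d:ℝ) / (2 * (d:ℝ) * m + 1) := by
            unfold dseq
            push_cast
            ring_nf
    calc liminf (dseq {m : ℤ | m / d ∈ E}) atTop
        ≤ liminf (dseq {m : ℤ | m / d ∈ E} ∘ fun m => d' * m) atTop := step1
      _ ≤ liminf (fun m => dseq E (m + 1)) atTop := step2
      _ = liminf (dseq E) atTop := auxSucc (dseq E)

lemma dirA {S : Set ℤ} {d : ℤ} (hd : 1 ≤ d) (hdvd : ∀ s ∈ S, d ∣ s)
    {D : Set ℤ} (hD : Dominating S D) :
    ∃ E : Set ℤ, Dominating ((fun s => s / d) '' S) E ∧ lowerDensity E ≤ lowerDensity D := by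
  have hd0 : d ≠ 0 := by omega
  have hdpos : (0:ℤ) < d := by omega
  set R := Finset.Icc (0 : ℤ) (d - 1) with hR
  have hRne : R.Nonempty := ⟨0, by rw [hR, Finset.mem_Icc]; omega⟩
  have hdom : ∀ r : ℤ, Dominating ((fun s => s / d) '' S) {e : ℤ | d * e + r ∈ D} := by
    intro r m'
    rcases hD (d * m' + r) with h | ⟨u, hu, s, hsS, heq⟩
    · exact Or.inl h
    · refine Or.inr ⟨m' - s / d, ?_, s / d, ⟨s, hsS, rfl⟩, by ring⟩
      show d * (m' - s / d) + r ∈ D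
      have hs : d * (s / d) = s := Int.mul_ediv_cancel' (hdvd s hsS)
      have hux : d * (m' - s / d) + r = u := by rw [mul_sub, hs]; linarith [heq]
      rw [hux]; exact hu
  obtain ⟨r₀, hr₀R, hr₀min⟩ := Finset.exists_min_image R
      (fun r => liminf (dseq {e : ℤ | d * e + r ∈ D}) atTop) hRne
  refine ⟨{e : ℤ | d * e + r₀ ∈ D}, hdom r₀, ?_⟩
  rw [lowerDensity_eq, lowerDensity_eq]
  set d' := d.toNat with hd'
  have hd'pos : 0 < d' := by omega
  have hdt : (d' : ℤ) = d := Int.toNat_of_nonneg (by omega)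
  have hdR : ((d' : ℕ) : ℝ) = (d:ℝ) := by exact_mod_cast congrArg (fun z : ℤ => (z:ℝ)) hdt
  have hdR1 : (1:ℝ) ≤ (d:ℝ) := by exact_mod_cast hd
  set B : ℕ → ℝ := fun m => ∑ r ∈ R, dseq {e : ℤ | d * e + r ∈ D} m with hB
  have hcard : R.card = d' := by rw [hR, Int.card_Icc]; omega
  have hB0 : ∀ m, 0 ≤ B m := fun m => Finset.sum_nonneg fun r _ => dseq_nonneg _ m
  have hBd : ∀ m, B m ≤ (d:ℝ) := by
    intro m
    calc B m ≤ ∑ r ∈ R, 1 := Finset.sum_le_sum fun r _ => dseq_le_one _ m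
    _ = (R.card : ℝ) := by simp
    _ = (d:ℝ) := by rw [hcard, hdR]
  set φ : ℕ → ℕ := fun n => n / d' - 1 with hφdef
  have hφ : Tendsto φ atTop atTop := by
    refine tendsto_atTop_atTop.2 fun b => ⟨d' * (b + 1), fun n hn => ?_⟩
    have h1 : (b + 1) * d' ≤ n := by rw [Nat.mul_comm]; exact hn
    have h2 : b + 1 ≤ n / d' := (Nat.le_div_iff_mul_le hd'pos).2 h1
    simp only [hφdef]
    omega
  have hε : Tendsto (fun n => 3 / (2 * ((φ n : ℕ):ℝ) + 4)) atTop (nhds 0) := by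
    refine Tendsto.div_atTop tendsto_const_nhds ?_
    refine tendsto_atTop_add_const_right _ 4 ?_
    exact Tendsto.const_mul_atTop (by norm_num : (0:ℝ) < 2)
      (tendsto_natCast_atTop_atTop.comp hφ)
  have hmain : ∀ᶠ n in atTop,
      (1/(d:ℝ)) * B (φ n) ≤ dseq D n + 3 / (2 * ((φ n : ℕ):ℝ) + 4) := by
    rw [eventually_atTop]
    refine ⟨d', fun n hn => ?_⟩
    set m := φ n with hm
    have hnd : 1 ≤ n / d' := (Nat.le_div_iff_mul_le hd'pos).2 (by omega)
    have hm1 : m + 1 = n / d' := by simp only [hm, hφdef]; omega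
    have hc1 : d' * (m + 1) ≤ n := by
      rw [hm1, Nat.mul_comm]
      exact Nat.div_mul_le_self n d'
    have hc2 : n < d' * (m + 2) := by
      have h2 : n / d' < m + 2 := by omega
      have h3 := (Nat.div_lt_iff_lt_mul hd'pos).1 h2
      rw [Nat.mul_comm] at h3
      exact h3
    have hcast : d * ((m : ℤ) + 1) ≤ (n : ℤ) := by
      have h4 := (Nat.cast_le (α := ℤ)).2 hc1
      push_cast [hdt] at h4
      linarith
    have hcnt := cntA hd D n m hcast
    have hup : 2 * (n:ℝ) + 1 ≤ 2 * (d:ℝ) * (m:ℝ) + 4 * (d:ℝ) := by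
      have h5 := (Nat.cast_le (α := ℝ)).2 (Nat.succ_le_of_lt hc2)
      push_cast [hdR] at h5
      nlinarith
    have key := auxIneqA hdR1 (Nat.cast_nonneg m) (hB0 m) (hBd m) (Nat.cast_nonneg n) hup
    have heq2 : ((2*(m:ℝ)+1)/(2*(n:ℝ)+1)) * B m
        = ∑ r ∈ R, ((cntF {e : ℤ | d * e + r ∈ D} m).card : ℝ) / (2*(n:ℝ)+1) := by
      rw [hB, Finset.mul_sum]
      refine Finset.sum_congr rfl fun r _ => ?_
      unfold dseq
      have h1 : (2*(m:ℝ)+1) ≠ 0 := ne_of_gt (denom_pos m)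
      have h2 : (2*(n:ℝ)+1) ≠ 0 := ne_of_gt (denom_pos n)
      field_simp
    have hle2 : ∑ r ∈ R, ((cntF {e : ℤ | d * e + r ∈ D} m).card : ℝ) / (2*(n:ℝ)+1)
        ≤ dseq D n := by
      unfold dseq
      rw [← Finset.sum_div]
      exact (div_le_div_iff_of_pos_right (denom_pos n)).2 (by exact_mod_cast hcnt)
    rw [heq2] at key
    linarith
  have hBsub := auxSub (C := (d:ℝ)) hB0 hBd hφ
  have hCm := auxCMul (c := 1/(d:ℝ)) (by positivity) (fun n => hB0 (φ n)) (fun n => hBd (φ n))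
  have hL0 := auxL0 (u := fun n => (1/(d:ℝ)) * B (φ n)) (v := dseq D) (C := (1:ℝ))
    (fun n => mul_nonneg (by positivity) (hB0 (φ n))) (dseq_nonneg D) (dseq_le_one D) hε hmain
  have hdne : (d:ℝ) ≠ 0 := by positivity
  calc liminf (dseq {e : ℤ | d * e + r₀ ∈ D}) atTop
      = (1/(d:ℝ)) * ((d:ℝ) * liminf (dseq {e : ℤ | d * e + r₀ ∈ D}) atTop) := by
        field_simp
    _ ≤ (1/(d:ℝ)) * (∑ r ∈ R, liminf (dseq {e : ℤ | d * e + r ∈ D}) atTop) := by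
        refine mul_le_mul_of_nonneg_left ?_ (by positivity)
        have hconst : (d:ℝ) * liminf (dseq {e : ℤ | d * e + r₀ ∈ D}) atTop
            = ∑ _r ∈ R, liminf (dseq {e : ℤ | d * e + r₀ ∈ D}) atTop := by
          rw [Finset.sum_const, hcard, nsmul_eq_mul, hdR]
        rw [hconst]
        exact Finset.sum_le_sum fun r hr => hr₀min r hr
    _ ≤ (1/(d:ℝ)) * liminf B atTop := by
        refine mul_le_mul_of_nonneg_left ?_ (by positivity)
        exact auxSum R (fun r => dseq {e : ℤ | d * e + r ∈ D})
          (fun r n => dseq_nonneg _ n) (fun r n => dseq_le_one _ n)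
    _ ≤ (1/(d:ℝ)) * liminf (B ∘ φ) atTop := mul_le_mul_of_nonneg_left hBsub (by positivity)
    _ ≤ liminf (fun n => (1/(d:ℝ)) * B (φ n)) atTop := hCm
    _ ≤ liminf (dseq D) atTop := hL0

theorem stmt_6 (S : Set ℤ) (hS : S.Finite) (h0 : 0 ∉ S) (d : ℤ) (hd : 1 ≤ d)
    (hdvd : ∀ s ∈ S, d ∣ s) :
    dominationRatio ((fun s => s / d) '' S) = dominationRatio S := by
  have hBdd : ∀ T : Set ℤ, BddBelow (lowerDensity '' {D : Set ℤ | Dominating T D}) := by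
    intro T
    refine ⟨0, fun y hy => ?_⟩
    obtain ⟨A, -, rfl⟩ := hy
    exact lowerDensity_nonneg A
  have hNe : ∀ T : Set ℤ, (lowerDensity '' {D : Set ℤ | Dominating T D}).Nonempty := by
    intro T
    exact ⟨lowerDensity Set.univ, Set.univ, fun m => Or.inl trivial, rfl⟩
  apply le_antisymm
  · refine le_csInf (hNe S) ?_
    rintro x ⟨D, hD, rfl⟩
    obtain ⟨E, hE, hle⟩ := dirA hd hdvd hD
    exact csInf_le_of_le (hBdd _) ⟨E, hE, rfl⟩ hle
  · refine le_csInf (hNe _) ?_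
    rintro x ⟨E, hE, rfl⟩
    obtain ⟨Dn, hDn, hle⟩ := dirB hd hdvd hE
    exact csInf_le_of_le (hBdd S) ⟨Dn, hDn, rfl⟩ hle
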